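/- Let a : ℕ → ℤ, k ≥ 1, ℓ a prime, R ≥ 1, and p a prime with p ∤ ℓ such that a(1) = 1 and a(pn) + p^{k-1}·a(n/p) ≡ 0 (mod ℓ^R) for all n ≥ 1 (with a(n/p) = 0 when p ∤ n). Then for all m ≥ 0, a(p^{2m+1}) ≡ 0 (mod ℓ^R) and a(p^{2m}) ≡ (-p^{k-1})^m (mod ℓ^R). -/
import Mathlib


theorem hecke_vanishing_prime_powers_mod (a : ℕ → ℤ) (ha1 : a 1 = 1) (k : ℕ) (hk : 1 ≤ k)
    (ℓ : ℕ) (hℓ : ℓ.Prime) (R : ℕ) (hR : 1 ≤ R)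
    (p : ℕ) (hp : p.Prime) (hpℓ : p ≠ ℓ)
    (hHecke : ∀ n : ℕ, 1 ≤ n →
      a (p * n) + (p : ℤ) ^ (k - 1) * (if p ∣ n then a (n / p) else 0) ≡ 0
        [ZMOD (ℓ : ℤ) ^ R]) :
    ∀ m : ℕ, a (p ^ (2 * m + 1)) ≡ 0 [ZMOD (ℓ : ℤ) ^ R] ∧
      a (p ^ (2 * m)) ≡ (-(p : ℤ) ^ (k - 1)) ^ m [ZMOD (ℓ : ℤ) ^ R] := by
  have hp1 : 1 ≤ p := hp.one_lt.le
  have hppos : ∀ j : ℕ, 1 ≤ p ^ j := fun j => Nat.one_le_pow _ _ hp.pos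
  have key : ∀ j : ℕ, a (p ^ (j + 2)) ≡ -(p : ℤ) ^ (k - 1) * a (p ^ j)
      [ZMOD (ℓ : ℤ) ^ R] := by
    intro j
    have h := hHecke (p ^ (j + 1)) (hppos _)
    have hd : p ∣ p ^ (j + 1) := dvd_pow_self p (Nat.succ_ne_zero j)
    rw [if_pos hd] at h
    have h1 : p * p ^ (j + 1) = p ^ (j + 2) := by ring
    have h2 : p ^ (j + 1) / p = p ^ j := by
      rw [pow_succ, Nat.mul_div_cancel _ hp.pos]
    rw [h1, h2] at h
    have := h.sub (Int.ModEq.refl ((p : ℤ) ^ (k - 1) * a (p ^ j)))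
    simpa [sub_eq_iff_eq_add, neg_mul] using this
  intro m
  induction m with
  | zero =>
    constructor
    · have h := hHecke 1 le_rfl
      rw [if_neg (by simpa using hp.one_lt.ne')] at h
      simpa using h
    · simp [ha1]
  | succ m ih =>
    obtain ⟨ih1, ih2⟩ := ih
    constructor
    · have h := key (2 * m + 1)
      have : (2 * (m + 1) + 1) = (2 * m + 1) + 2 := by ring
      rw [this]
      calc a (p ^ (2 * m + 1 + 2)) ≡ -(p : ℤ) ^ (k - 1) * a (p ^ (2 * m + 1))
            [ZMOD (ℓ : ℤ) ^ R] := h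
        _ ≡ -(p : ℤ) ^ (k - 1) * 0 [ZMOD (ℓ : ℤ) ^ R] := ih1.mul_left _
        _ = 0 := by ring
    · have h := key (2 * m)
      have he : (2 * (m + 1)) = (2 * m) + 2 := by ring
      rw [he]
      calc a (p ^ (2 * m + 2)) ≡ -(p : ℤ) ^ (k - 1) * a (p ^ (2 * m))
            [ZMOD (ℓ : ℤ) ^ R] := h
        _ ≡ -(p : ℤ) ^ (k - 1) * (-(p : ℤ) ^ (k - 1)) ^ m [ZMOD (ℓ : ℤ) ^ R] :=
            ih2.mul_left _
        _ = (-(p : ℤ) ^ (k - 1)) ^ (m + 1) := by ring
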